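/- Let Z be an abelian group, let A ⊆ Z be finite and nonempty, let B ⊆ A be nonempty, let K ≥ 2 and β ≥ 0 be real numbers with |B − A| ≤ K^β |A|. Then there exist a real number α ≤ β and a set G ⊆ B × B such that: (i) |((a − a′) + A) ∩ A| ≥ K^{α−β} |A| for every (a, a′) ∈ G; and (ii) |G| ≥ K^{−α} |B|² / (4 log₂(4 K^β)). -/

import Mathlib

open Finset Pointwise
open scoped Classical

lemma energy_eq' {Z : Type*} [AddCommGroup Z] [DecidableEq Z] (A B : Finset Z) :
    Finset.addEnergy B (-A)
      = ∑ p ∈ B ×ˢ B, ((A.image fun a => (p.1 - p.2) + a) ∩ A).card := by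
  rw [Finset.addEnergy, Finset.card_filter, Finset.sum_product]
  refine Finset.sum_congr rfl fun x hx => ?_
  rw [← Finset.card_filter]
  refine Finset.card_nbij' (fun c => -c.1) (fun z => (-z, -(z - x.1 + x.2))) ?_ ?_ ?_ ?_
  · rintro ⟨c₁, c₂⟩ hc
    simp only [Finset.mem_coe, Finset.mem_filter, Finset.mem_product, Finset.mem_neg'] at hc
    obtain ⟨⟨h1, h2⟩, heq⟩ := hc
    have h : c₂ = x.1 + c₁ - x.2 := by rw [heq]; abel
    simp only [Finset.mem_coe, Finset.mem_inter, Finset.mem_image]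
    exact ⟨⟨-c₂, h2, by rw [h]; abel⟩, h1⟩
  · intro z hz
    simp only [Finset.mem_coe, Finset.mem_inter, Finset.mem_image] at hz
    obtain ⟨⟨a, ha, hza⟩, hzA⟩ := hz
    simp only [Finset.mem_coe, Finset.mem_filter, Finset.mem_product, Finset.mem_neg']
    refine ⟨⟨by simpa using hzA, ?_⟩, ?_⟩
    · have h : z - x.1 + x.2 = a := by rw [← hza]; abel
      rw [h]; simpa using ha
    · abel
  · rintro ⟨c₁, c₂⟩ hc
    simp only [Finset.mem_coe, Finset.mem_filter] at hc
    have h : c₂ = x.1 + c₁ - x.2 := by rw [hc.2]; abel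
    have h2 : -(-c₁ - x.1 + x.2) = c₂ := by rw [h]; abel
    simp [h2]
  · intro z hz; simp

set_option maxHeartbeats 1000000 in
/-- If `B ⊆ A` is nonempty, `K ≥ 2`, `β ≥ 0` and `|B − A| ≤ K^β|A|`, then there are `α ≤ β`
and `G ⊆ B × B` with `|((a − a′) + A) ∩ A| ≥ K^{α−β}|A|` for every `(a,a′) ∈ G`, and
`|G| ≥ K^{−α}|B|²/(4 log₂(4K^β))`. -/
theorem statement12 {Z : Type*} [AddCommGroup Z] [DecidableEq Z]
    (A : Finset Z) (hA : A.Nonempty) (B : Finset Z) (hB : B.Nonempty) (hBA : B ⊆ A)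
    (K β : ℝ) (hK : 2 ≤ K) (hβ : 0 ≤ β)
    (hdoub : ((B - A).card : ℝ) ≤ K ^ β * (A.card : ℝ)) :
    ∃ (α : ℝ) (G : Finset (Z × Z)), α ≤ β ∧ G ⊆ B ×ˢ B ∧
      (∀ p ∈ G, K ^ (α - β) * (A.card : ℝ) ≤
        (((A.image (fun a => (p.1 - p.2) + a)) ∩ A).card : ℝ)) ∧
      K ^ (-α) * (B.card : ℝ) ^ 2 / (4 * Real.logb 2 (4 * K ^ β)) ≤ (G.card : ℝ) := by
  classical
  set f : Z × Z → ℕ := fun p => ((A.image fun a => (p.1 - p.2) + a) ∩ A).card with hfdef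
  have hKpos : (0:ℝ) < K := by linarith
  have hK1 : (1:ℝ) < K := by linarith
  have hKβ1 : (1:ℝ) ≤ K ^ β := Real.one_le_rpow hK1.le hβ
  have hKβpos : (0:ℝ) < K ^ β := by linarith
  have hK2 : ∀ x : ℝ, K ^ (Real.logb K 2 * x) = (2:ℝ) ^ x := fun x => by
    rw [Real.rpow_mul hKpos.le, Real.rpow_logb hKpos (ne_of_gt hK1) (by norm_num)]
  have hc0 : 0 < A.card := hA.card_pos
  have hc0R : (0:ℝ) < A.card := by exact_mod_cast hc0
  have hb0R : (0:ℝ) < B.card := by exact_mod_cast hB.card_pos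
  have hfle : ∀ p, f p ≤ A.card := fun p => Finset.card_le_card Finset.inter_subset_right
  have hf1 : ∀ p ∈ B ×ˢ B, 1 ≤ f p := by
    rintro ⟨b₁, b₂⟩ hp
    rw [Finset.mem_product] at hp
    refine Finset.card_pos.2 ⟨b₁, Finset.mem_inter.2 ⟨?_, hBA hp.1⟩⟩
    exact Finset.mem_image.2 ⟨b₂, hBA hp.2, by abel⟩
  -- Cauchy-Schwarz via additive energy
  set T : ℝ := ∑ p ∈ B ×ˢ B, (f p : ℝ) with hTdef
  have hT0 : 0 ≤ T := Finset.sum_nonneg fun p _ => by positivity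
  have key : (B.card:ℝ)^2 * (A.card:ℝ)^2 ≤ ((B - A).card:ℝ) * T := by
    have h1 := Finset.le_card_add_mul_addEnergy B (-A)
    rw [energy_eq' A B] at h1
    have h2 : B + -A = B - A := by rw [sub_eq_add_neg]
    have h3 : (-A).card = A.card := Finset.card_neg A
    rw [h2, h3] at h1
    rw [hTdef]
    simp only [hfdef]
    exact_mod_cast h1
  have hT : K ^ (-β) * (B.card:ℝ)^2 * (A.card:ℝ) ≤ T := by
    have h4 : ((B - A).card:ℝ) * T ≤ K ^ β * (A.card:ℝ) * T :=
      mul_le_mul_of_nonneg_right hdoub hT0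
    have h5 : (B.card:ℝ)^2 * (A.card:ℝ) ≤ K ^ β * T := by
      have := key.trans h4
      nlinarith
    rw [Real.rpow_neg hKpos.le]
    rw [show (K ^ β)⁻¹ * (B.card:ℝ)^2 * (A.card:ℝ)
        = ((B.card:ℝ)^2 * (A.card:ℝ)) * (K ^ β)⁻¹ by ring]
    rw [mul_inv_le_iff₀ hKβpos]
    linarith [h5]
  -- number of dyadic levels
  set M : ℕ := ⌈Real.logb 2 (2 * K ^ β)⌉₊ with hMdef
  have hlogb1 : (1:ℝ) ≤ Real.logb 2 (2 * K ^ β) := by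
    rw [show (1:ℝ) = Real.logb 2 2 by simp]
    exact Real.logb_le_logb_of_le (by norm_num) (by norm_num) (by linarith)
  have hM1 : 1 ≤ M := by
    rw [hMdef]
    exact Nat.one_le_ceil_iff.2 (by linarith)
  have hM0R : (0:ℝ) < M := by exact_mod_cast hM1
  have hMK : 2 * K ^ β ≤ (2:ℝ) ^ M := by
    have h := Nat.le_ceil (Real.logb 2 (2 * K ^ β))
    rw [← hMdef] at h
    have := (Real.logb_le_iff_le_rpow (by norm_num) (by linarith)).1 h
    rwa [Real.rpow_natCast] at this
  have hML : (M:ℝ) ≤ Real.logb 2 (4 * K ^ β) := by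
    have h := Nat.ceil_lt_add_one (by linarith : (0:ℝ) ≤ Real.logb 2 (2 * K ^ β))
    rw [← hMdef] at h
    have h4 : Real.logb 2 (4 * K ^ β) = Real.logb 2 (2 * K ^ β) + 1 := by
      rw [show (4:ℝ) * K ^ β = 2 * (2 * K ^ β) by ring,
        Real.logb_mul (by norm_num) (by positivity)]
      simp [add_comm]
    rw [h4]; linarith
  have hLpos : (0:ℝ) < Real.logb 2 (4 * K ^ β) := by linarith
  -- high pairs
  set H : Finset (Z × Z) := (B ×ˢ B).filter (fun p => A.card < f p * 2 ^ M) with hHdef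
  have hsplit : K ^ (-β) * (B.card:ℝ)^2 * (A.card:ℝ) / 2 ≤ ∑ p ∈ H, (f p : ℝ) := by
    have hTsplit : T = (∑ p ∈ H, (f p : ℝ))
        + ∑ p ∈ (B ×ˢ B).filter (fun p => ¬ (A.card < f p * 2 ^ M)), (f p : ℝ) := by
      rw [hTdef, ← Finset.sum_filter_add_sum_filter_not (B ×ˢ B) (fun p => A.card < f p * 2 ^ M)]
    have hlow : ∀ p ∈ (B ×ˢ B).filter (fun p => ¬ (A.card < f p * 2 ^ M)),
        (f p : ℝ) ≤ K ^ (-β) * (A.card:ℝ) / 2 := by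
      intro p hp
      rw [Finset.mem_filter, not_lt] at hp
      have h1 : (f p : ℝ) * 2 ^ M ≤ (A.card:ℝ) := by exact_mod_cast hp.2
      have h2 : (0:ℝ) < 2 ^ M := by positivity
      have h3 : (f p : ℝ) ≤ (A.card:ℝ) / 2 ^ M := by
        rw [le_div_iff₀ h2]; exact h1
      refine h3.trans ?_
      rw [div_le_iff₀ h2, Real.rpow_neg hKpos.le]
      rw [show (K ^ β)⁻¹ * (A.card:ℝ) / 2 * 2 ^ M
          = (A.card:ℝ) * (2 ^ M / (2 * K ^ β)) by field_simp]
      nth_rewrite 1 [show (A.card:ℝ) = (A.card:ℝ) * 1 by ring]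
      apply mul_le_mul_of_nonneg_left _ hc0R.le
      rw [le_div_iff₀ (by positivity)]
      linarith
    have hcard : (((B ×ˢ B).filter (fun p => ¬ (A.card < f p * 2 ^ M))).card : ℝ)
        ≤ (B.card:ℝ)^2 := by
      have := Finset.card_filter_le (B ×ˢ B) (fun p => ¬ (A.card < f p * 2 ^ M))
      have h2 : (B ×ˢ B).card = B.card * B.card := Finset.card_product B B
      have : ((B ×ˢ B).filter (fun p => ¬ (A.card < f p * 2 ^ M))).card ≤ B.card * B.card := by
        omega
      calc (((B ×ˢ B).filter (fun p => ¬ (A.card < f p * 2 ^ M))).card : ℝ)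
          ≤ (B.card:ℝ) * B.card := by exact_mod_cast this
        _ = (B.card:ℝ)^2 := by ring
    have hlowsum : ∑ p ∈ (B ×ˢ B).filter (fun p => ¬ (A.card < f p * 2 ^ M)), (f p : ℝ)
        ≤ (B.card:ℝ)^2 * (K ^ (-β) * (A.card:ℝ) / 2) := by
      calc ∑ p ∈ (B ×ˢ B).filter (fun p => ¬ (A.card < f p * 2 ^ M)), (f p : ℝ)
          ≤ ∑ p ∈ (B ×ˢ B).filter (fun p => ¬ (A.card < f p * 2 ^ M)),
            (K ^ (-β) * (A.card:ℝ) / 2) := Finset.sum_le_sum hlow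
        _ = (((B ×ˢ B).filter (fun p => ¬ (A.card < f p * 2 ^ M))).card : ℝ)
            * (K ^ (-β) * (A.card:ℝ) / 2) := by rw [Finset.sum_const]; ring
        _ ≤ (B.card:ℝ)^2 * (K ^ (-β) * (A.card:ℝ) / 2) := by
            apply mul_le_mul_of_nonneg_right hcard; positivity
    nlinarith [hT, hTsplit, hlowsum]
  -- dyadic pigeonhole
  set ι : Z × Z → ℕ := fun p => Nat.log 2 (A.card / f p) with hιdef
  have hdivpos : ∀ p ∈ B ×ˢ B, A.card / f p ≠ 0 := by
    intro p hp
    have := hf1 p hp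
    have := hfle p
    have : 1 ≤ A.card / f p := (Nat.one_le_div_iff (by omega)).2 (hfle p)
    omega
  have hmaps : ∀ p ∈ H, ι p ∈ Finset.range M := by
    intro p hp
    rw [hHdef, Finset.mem_filter] at hp
    rw [Finset.mem_range, hιdef]
    have hfp : 0 < f p := hf1 p hp.1
    have hdlt : A.card / f p < 2 ^ M := by
      rw [Nat.div_lt_iff_lt_mul hfp, Nat.mul_comm]; exact hp.2
    exact Nat.log_lt_of_lt_pow (hdivpos p hp.1) hdlt
  have hHsum := hsplit
  have hfib : ∑ i ∈ Finset.range M, ∑ p ∈ H.filter (fun p => ι p = i), (f p : ℝ)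
      = ∑ p ∈ H, (f p : ℝ) := Finset.sum_fiberwise_of_maps_to hmaps _
  have hpig : ∃ i ∈ Finset.range M,
      (∑ p ∈ H, (f p : ℝ)) / M ≤ ∑ p ∈ H.filter (fun p => ι p = i), (f p : ℝ) := by
    apply Finset.exists_le_of_sum_le ⟨0, Finset.mem_range.2 (by omega)⟩
    rw [hfib, Finset.sum_const, Finset.card_range, nsmul_eq_mul]
    rw [mul_div_cancel₀]
    exact ne_of_gt hM0R
  obtain ⟨i, hiM, hlev⟩ := hpig
  rw [Finset.mem_range] at hiM
  -- the set G and exponent α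
  refine ⟨β - (i+1) * Real.logb K 2,
    (B ×ˢ B).filter (fun p => A.card < f p * 2 ^ (i+1)), ?_, Finset.filter_subset _ _, ?_, ?_⟩
  · have : 0 < Real.logb K 2 := Real.logb_pos hK1 (by norm_num)
    nlinarith
  · -- condition (i)
    intro p hp
    rw [Finset.mem_filter] at hp
    have hKα : K ^ ((β - (i+1) * Real.logb K 2) - β) = ((2:ℝ) ^ (i+1))⁻¹ := by
      rw [show (β - (i+1) * Real.logb K 2) - β = Real.logb K 2 * (-((i:ℝ)+1)) by ring]
      rw [hK2, Real.rpow_neg (by norm_num),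
        show ((i:ℝ)+1) = ((i+1 : ℕ) : ℝ) by push_cast; ring, Real.rpow_natCast]
    rw [hKα]
    have h1 : (A.card:ℝ) < (f p : ℝ) * 2 ^ (i+1) := by exact_mod_cast hp.2
    rw [inv_mul_le_iff₀ (by positivity)]
    rw [mul_comm]
    exact h1.le
  · -- condition (ii)
    have hKα2 : K ^ (-(β - (i+1) * Real.logb K 2)) = K ^ (-β) * (2:ℝ) ^ (i+1) := by
      rw [show -(β - (i+1) * Real.logb K 2) = -β + (Real.logb K 2) * ((i:ℝ)+1) by ring]
      rw [Real.rpow_add hKpos, hK2]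
      congr 1
      rw [show ((i:ℝ)+1) = ((i+1 : ℕ) : ℝ) by push_cast; ring, Real.rpow_natCast]
    rw [hKα2]
    -- bound card of level set
    set lev := H.filter (fun p => ι p = i) with hlevdef
    have hlevG : lev ⊆ (B ×ˢ B).filter (fun p => A.card < f p * 2 ^ (i+1)) := by
      intro p hp
      rw [hlevdef, Finset.mem_filter, hHdef, Finset.mem_filter] at hp
      obtain ⟨⟨hpB, _⟩, hpi⟩ := hp
      rw [Finset.mem_filter]
      refine ⟨hpB, ?_⟩
      have hfp : 0 < f p := hf1 p hpB
      have : A.card / f p < 2 ^ (i+1) := by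
        simp only [hιdef] at hpi
        have := Nat.lt_pow_succ_log_self (by norm_num : 1 < 2) (A.card / f p)
        simpa [hpi] using this
      exact lt_of_lt_of_eq ((Nat.div_lt_iff_lt_mul hfp).1 this) (Nat.mul_comm _ _)
    have hup : ∀ p ∈ lev, (f p : ℝ) ≤ (A.card:ℝ) / 2 ^ i := by
      intro p hp
      rw [hlevdef, Finset.mem_filter, hHdef, Finset.mem_filter] at hp
      obtain ⟨⟨hpB, _⟩, hpi⟩ := hp
      have hfp : 0 < f p := hf1 p hpB
      have h1 : 2 ^ i ≤ A.card / f p := by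
        simp only [hιdef] at hpi
        have := Nat.pow_log_le_self 2 (hdivpos p hpB)
        rwa [hpi] at this
      have h2 : f p * 2 ^ i ≤ A.card := by
        calc f p * 2 ^ i ≤ f p * (A.card / f p) := Nat.mul_le_mul_left _ h1
          _ = (A.card / f p) * f p := by ring
          _ ≤ A.card := Nat.div_mul_le_self _ _
      rw [le_div_iff₀ (by positivity)]
      exact_mod_cast h2
    have hlevcard : ∑ p ∈ lev, (f p : ℝ) ≤ (lev.card : ℝ) * ((A.card:ℝ) / 2 ^ i) := by
      calc ∑ p ∈ lev, (f p : ℝ) ≤ ∑ p ∈ lev, ((A.card:ℝ) / 2 ^ i) := Finset.sum_le_sum hup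
        _ = (lev.card : ℝ) * ((A.card:ℝ) / 2 ^ i) := by rw [Finset.sum_const]; ring
    have hGc : (lev.card : ℝ)
        ≤ (((B ×ˢ B).filter (fun p => A.card < f p * 2 ^ (i+1))).card : ℝ) := by
      exact_mod_cast Finset.card_le_card hlevG
    -- assemble
    have hchain : K ^ (-β) * (B.card:ℝ)^2 * (A.card:ℝ) / 2 / M
        ≤ (lev.card : ℝ) * ((A.card:ℝ) / 2 ^ i) := by
      refine le_trans ?_ (hlev.trans hlevcard)
      gcongr
    have hpos2 : (0:ℝ) < (A.card:ℝ) / 2 ^ i := by positivity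
    have h6 : K ^ (-β) * (B.card:ℝ)^2 * 2 ^ i / (2 * M) ≤ (lev.card : ℝ) := by
      have := (div_le_iff₀ hpos2).2 hchain
      refine le_trans (le_of_eq ?_) this
      field_simp
    calc K ^ (-β) * (2:ℝ) ^ (i+1) * (B.card:ℝ) ^ 2 / (4 * Real.logb 2 (4 * K ^ β))
        = (K ^ (-β) * (B.card:ℝ)^2 * 2 ^ i) / (2 * Real.logb 2 (4 * K ^ β)) := by
          rw [pow_succ]; ring
      _ ≤ (K ^ (-β) * (B.card:ℝ)^2 * 2 ^ i) / (2 * M) := by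
          apply div_le_div_of_nonneg_left _ (by positivity) (by linarith)
          positivity
      _ ≤ (lev.card : ℝ) := h6
      _ ≤ _ := hGc
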